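/- (Theorem 6.5) Fix n ≥ 1. A subset C ⊆ ℤ × {0,…,n} is a configuration of ℤA_{n+1} if and only if there exists a 2-Brauer relation of rank n, i.e. a noncrossing involution σ : ZMod n → ZMod n, such that C = { (p,r) ∈ ℤ × {0,…,n} : the image of p+r in ZMod n equals σ applied to the image of p in ZMod n }. Moreover σ is uniquely determined by C, so this assignment is a bijection between the configurations of ℤA_{n+1} and the 2-Brauer relations of rank n. -/

import Mathlib

/-- Sum over the arrows `y → v` of `ℤA_{n+1}` of the value `f v`. The vertex set of
`ℤA_{n+1}` is `ℤ × {0,…,n}`, with arrows `(q,s) → (q,s+1)` for `s < n` and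
`(q,s) → (q+1,s-1)` for `0 < s`. -/
def stepA (n : ℕ) (f : ℤ × ℕ → ℕ) (y : ℤ × ℕ) : ℤ :=
  (if y.2 < n then (f (y.1, y.2 + 1) : ℤ) else 0) +
    (if 0 < y.2 then (f (y.1 + 1, y.2 - 1) : ℤ) else 0)

/-- `hA n x k y` is `h_k(y,x)` for `ℤA_{n+1}`: `h_0(y,x) = δ(y,x)` and, for `k > 0`,
`h_k(y,x) = max(h'_k(y,x), 0)` where
`h'_k(y,x) = ∑_{y → v} h_{k-1}(v,x) - h_{k-2}(τ⁻¹ y, x)` and `τ⁻¹(q,s) = (q+1,s)`. -/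
def hA (n : ℕ) (x : ℤ × ℕ) : ℕ → ℤ × ℕ → ℕ
  | 0 => fun y => if y = x then 1 else 0
  | 1 => fun y => (stepA n (hA n x 0) y).toNat
  | k + 2 => fun y =>
      (stepA n (hA n x (k + 1)) y - (hA n x k (y.1 + 1, y.2) : ℤ)).toNat

/-- `h'A n x k y` is `h'_k(y,x)` (meaningful for `k ≥ 1`):
`h'_k(y,x) = ∑_{y → v} h_{k-1}(v,x) - h_{k-2}(τ⁻¹ y, x) ∈ ℤ`. -/
def h'A (n : ℕ) (x : ℤ × ℕ) (k : ℕ) (y : ℤ × ℕ) : ℤ :=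
  stepA n (hA n x (k - 1)) y -
    (if 2 ≤ k then (hA n x (k - 2) (y.1 + 1, y.2) : ℤ) else 0)

/-- `hTotA n y x = h(y,x) = ∑_{k ≥ 0} h_k(y,x)` (a finite sum, via `finsum`). -/
noncomputable def hTotA (n : ℕ) (y x : ℤ × ℕ) : ℕ := ∑ᶠ k : ℕ, hA n x k y

/-- `ω` for `ℤA_{n+1}`: `ω(p,r) = (p+r-n, n-r)`. -/
def ωA (n : ℕ) (v : ℤ × ℕ) : ℤ × ℕ := (v.1 + v.2 - n, n - v.2)

/-- A configuration of `ℤA_{n+1}`: a set `C` of vertices of `ℤA_{n+1}` such that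
(C1) every vertex `y` satisfies `h(y,c) > 0` for some `c ∈ C`, and
(C2) `ω C = C` and for `c, d ∈ C`, `h(d,c)` is `2` if `d = c = ω c`, `1` if
`d = c ≠ ω c` or `d = ω c ≠ c`, and `0` otherwise. -/
def IsConfigA (n : ℕ) (C : Set (ℤ × ℕ)) : Prop :=
  (∀ v ∈ C, v.2 ≤ n) ∧
    (∀ y : ℤ × ℕ, y.2 ≤ n → ∃ c ∈ C, 0 < hTotA n y c) ∧
    ωA n '' C = C ∧
    ∀ c ∈ C, ∀ d ∈ C,
      hTotA n d c =
        if d = c ∧ c = ωA n c then 2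
        else if d = c ∨ d = ωA n c then 1
        else 0

/-- A `2`-Brauer relation of rank `n`: an involution `σ` of `ZMod n` which is
noncrossing with respect to the circular placement of `ZMod n` (ordered by
the value map `ZMod.val`). -/
def IsTwoBrauer (n : ℕ) (σ : ZMod n → ZMod n) : Prop :=
  Function.Involutive σ ∧
    ¬ ∃ i j : ZMod n, i.val < j.val ∧ j.val < (σ i).val ∧ (σ i).val < (σ j).val


set_option linter.unnecessarySeqFocus false

lemma hA_eq (n : ℕ) (p : ℤ) (r : ℕ) (hr : r ≤ n) :
    ∀ (k : ℕ) (q : ℤ) (s : ℕ), s ≤ n →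
    hA n (p, r) k (q, s) =
      if q ≤ p ∧ p ≤ q + s ∧ q + (s:ℤ) ≤ p + r ∧ p + (r:ℤ) ≤ q + n ∧
          (k : ℤ) = 2*(p-q) + ((r:ℤ) - s) then 1 else 0 := by
  intro k
  induction k using Nat.strong_induction_on with
  | _ k IH =>
    match k with
    | 0 =>
      intro q s hs
      simp only [hA, Prod.mk.injEq]
      split_ifs <;> omega
    | 1 =>
      intro q s hs
      show (stepA n (hA n (p,r) 0) (q,s)).toNat = _
      unfold stepA
      by_cases h1 : s < n <;> by_cases h2 : 0 < s
      · simp only [if_pos h1, if_pos h2, hA, Prod.mk.injEq]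
        split_ifs <;> omega
      · simp only [if_pos h1, if_neg h2, hA, Prod.mk.injEq]
        split_ifs <;> omega
      · simp only [if_neg h1, if_pos h2, hA, Prod.mk.injEq]
        split_ifs <;> omega
      · simp only [if_neg h1, if_neg h2, hA, Prod.mk.injEq]
        split_ifs <;> omega
    | (k+2) =>
      intro q s hs
      show (stepA n (hA n (p,r) (k + 1)) (q,s) - (hA n (p,r) k (q + 1, s) : ℤ)).toNat = _
      unfold stepA
      rw [IH k (by omega) (q+1) s (by omega)]
      by_cases h1 : s < n <;> by_cases h2 : 0 < s
      · rw [if_pos h1, if_pos h2, IH (k+1) (by omega) q (s+1) (by omega),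
          IH (k+1) (by omega) (q+1) (s-1) (by omega)]
        split_ifs <;> omega
      · rw [if_pos h1, if_neg h2, IH (k+1) (by omega) q (s+1) (by omega)]
        split_ifs <;> omega
      · rw [if_neg h1, if_pos h2, IH (k+1) (by omega) (q+1) (s-1) (by omega)]
        split_ifs <;> omega
      · rw [if_neg h1, if_neg h2]
        split_ifs <;> omega

lemma hTotA_eq (n : ℕ) (q p : ℤ) (s r : ℕ) (hs : s ≤ n) (hr : r ≤ n) :
    hTotA n (q, s) (p, r) =
      if q ≤ p ∧ p ≤ q + s ∧ q + (s:ℤ) ≤ p + r ∧ p + (r:ℤ) ≤ q + n then 1 else 0 := by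
  unfold hTotA
  split_ifs with h
  · rw [finsum_eq_single _ ((2*(p-q) + ((r:ℤ) - s)).toNat)]
    · rw [hA_eq n p r hr _ q s hs, if_pos ⟨h.1, h.2.1, h.2.2.1, h.2.2.2, by omega⟩]
    · intro k hk
      rw [hA_eq n p r hr _ q s hs, if_neg]
      rintro ⟨-, -, -, -, h5⟩
      omega
  · apply finsum_eq_zero_of_forall_eq_zero
    intro k
    rw [hA_eq n p r hr _ q s hs, if_neg]
    rintro ⟨a, b, c, d, -⟩
    exact h ⟨a, b, c, d⟩

lemma val_add_nat (n : ℕ) [NeZero n] (b : ZMod n) (t : ℕ) (ht : t < n) :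
    (b + (t : ℕ)).val = if b.val + t < n then b.val + t else b.val + t - n := by
  have hb := ZMod.val_lt b
  rw [ZMod.val_add, ZMod.val_natCast, Nat.mod_eq_of_lt ht]
  split_ifs with h
  · exact Nat.mod_eq_of_lt h
  · rw [Nat.mod_eq_sub_mod (by omega)]
    exact Nat.mod_eq_of_lt (by omega)

lemma crossing (n : ℕ) [NeZero n] (σ : ZMod n → ZMod n) (hinv : Function.Involutive σ)
    (b : ZMod n) (A s Cp : ℕ) (h0A : 0 < A) (hAs : A < s) (hsC : s < Cp) (hCn : Cp < n)
    (h1 : σ b = b + (s : ℕ)) (h2 : σ (b + (A : ℕ)) = b + (Cp : ℕ)) :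
    ∃ i j : ZMod n, i.val < j.val ∧ j.val < (σ i).val ∧ (σ i).val < (σ j).val := by
  have hσs : σ (b + (s : ℕ)) = b := by rw [← h1, hinv]
  have hσC : σ (b + (Cp : ℕ)) = b + (A : ℕ) := by rw [← h2, hinv]
  have hvA := val_add_nat n b A (by omega)
  have hvs := val_add_nat n b s (by omega)
  have hvC := val_add_nat n b Cp (by omega)
  have hb := ZMod.val_lt b
  by_cases h3 : b.val + Cp < n
  · exact ⟨b, b + (A : ℕ), by simp only [h1, h2, hvA, hvs, hvC]; split_ifs <;> omega,
      by simp only [h1, h2, hvA, hvs, hvC]; split_ifs <;> omega⟩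
  by_cases h4 : b.val + s < n
  · exact ⟨b + (Cp : ℕ), b, by simp only [h1, hσC, hvA, hvs, hvC]; split_ifs <;> omega,
      by simp only [h1, hσC, hvA, hvs, hvC]; split_ifs <;> omega⟩
  by_cases h5 : b.val + A < n
  · exact ⟨b + (s : ℕ), b + (Cp : ℕ), by simp only [hσs, hσC, hvA, hvs, hvC]; split_ifs <;> omega,
      by simp only [hσs, hσC, hvA, hvs, hvC]; split_ifs <;> omega⟩
  · exact ⟨b + (A : ℕ), b + (s : ℕ), by simp only [h2, hσs, hvA, hvs, hvC]; split_ifs <;> omega,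
      by simp only [h2, hσs, hvA, hvs, hvC]; split_ifs <;> omega⟩

lemma exists_exit (n : ℕ) [NeZero n] (σ : ZMod n → ZMod n) (hinv : Function.Involutive σ)
    (b : ZMod n) (s : ℕ) (hs : s ≤ n) :
    ∃ t ≤ s, ((σ (b + (t : ℕ)) - b).val = 0 ∨ s ≤ (σ (b + (t : ℕ)) - b).val) := by
  by_cases hsn : s = n
  · refine ⟨(σ b - b).val, by have := ZMod.val_lt (σ b - b); omega, Or.inl ?_⟩
    have hx : b + ((σ b - b).val : ℕ) = σ b := by
      rw [ZMod.natCast_val, ZMod.cast_id]; ring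
    rw [hx, hinv, sub_self, ZMod.val_zero]
  · by_contra hcon
    push_neg at hcon
    have hkey : (Finset.range (s + 1)).card ≤ (Finset.Ioo 0 s).card := by
      apply Finset.card_le_card_of_injOn (fun t => (σ (b + (t : ℕ)) - b).val)
      · intro t ht
        simp only [Finset.mem_coe, Finset.mem_range] at ht
        have := hcon t (by omega)
        simp only [Finset.mem_coe, Finset.mem_Ioo]
        omega
      · intro t ht t' ht' hval
        simp only [Finset.mem_coe, Finset.mem_range] at ht ht'
        simp only at hval
        have h1 : σ (b + (t : ℕ)) - b = σ (b + (t' : ℕ)) - b := ZMod.val_injective n hval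
        have h2 : b + (t : ℕ) = b + (t' : ℕ) := hinv.injective (by rwa [sub_left_inj] at h1)
        have h3 : ((t : ℕ) : ZMod n) = ((t' : ℕ) : ZMod n) := add_left_cancel h2
        have h4 := congrArg ZMod.val h3
        rwa [ZMod.val_cast_of_lt (by omega), ZMod.val_cast_of_lt (by omega)] at h4
    simp only [Finset.card_range, Nat.card_Ioo] at hkey
    omega

def Cset (n : ℕ) (σ : ZMod n → ZMod n) : Set (ℤ × ℕ) :=
  {v : ℤ × ℕ | v.2 ≤ n ∧ ((v.1 + (v.2 : ℤ) : ℤ) : ZMod n) = σ ((v.1 : ℤ) : ZMod n)}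

lemma mem_Cset (n : ℕ) (σ : ZMod n → ZMod n) (p : ℤ) (r : ℕ) :
    (p, r) ∈ Cset n σ ↔ r ≤ n ∧ ((p + (r : ℤ) : ℤ) : ZMod n) = σ ((p : ℤ) : ZMod n) :=
  Iff.rfl

lemma cast_shift (n : ℕ) (q : ℤ) (t : ℕ) :
    ((q + (t : ℤ) : ℤ) : ZMod n) = ((q : ℤ) : ZMod n) + ((t : ℕ) : ZMod n) := by
  push_cast; ring

lemma region_cases (n : ℕ) (hn : 1 ≤ n) (σ : ZMod n → ZMod n) (hσ : IsTwoBrauer n σ)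
    (p q : ℤ) (r s : ℕ) (hc : (p, r) ∈ Cset n σ) (hd : (q, s) ∈ Cset n σ)
    (H1 : q ≤ p) (H2 : p ≤ q + (s : ℤ)) (H3 : q + (s : ℤ) ≤ p + (r : ℤ))
    (H4 : p + (r : ℤ) ≤ q + (n : ℤ)) :
    ((q : ℤ), s) = (p, r) ∨ ((q : ℤ), s) = ωA n (p, r) := by
  haveI : NeZero n := ⟨by omega⟩
  obtain ⟨hinv, hncr⟩ := hσ
  rw [mem_Cset] at hc hd
  obtain ⟨hrn, hcm⟩ := hc
  obtain ⟨hsn, hdm⟩ := hd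
  set b : ZMod n := ((q : ℤ) : ZMod n) with hb
  set A : ℕ := (p - q).toNat with hAdef
  set Cp : ℕ := (p + r - q).toNat with hCdef
  have hA : (A : ℤ) = p - q := Int.toNat_of_nonneg (by omega)
  have hCp : (Cp : ℤ) = p + r - q := Int.toNat_of_nonneg (by omega)
  have hAs : A ≤ s := by omega
  have hsC : s ≤ Cp := by omega
  have hCn : Cp ≤ n := by omega
  have h1 : σ b = b + ((s : ℕ) : ZMod n) := by
    rw [← hdm, cast_shift]
  have hp : ((p : ℤ) : ZMod n) = b + ((A : ℕ) : ZMod n) := by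
    rw [show p = q + (A : ℤ) by omega, cast_shift]
  have h2 : σ (b + ((A : ℕ) : ZMod n)) = b + ((Cp : ℕ) : ZMod n) := by
    rw [← hp, ← hcm, show p + (r : ℤ) = q + (Cp : ℤ) by omega, cast_shift]
  simp only [ωA, Prod.mk.injEq]
  rcases Nat.eq_zero_or_pos A with hA0 | hA0
  · -- A = 0
    have h2' : σ b = b + ((Cp : ℕ) : ZMod n) := by
      rw [← h2, hA0]; norm_num
    have hsc : ((s : ℕ) : ZMod n) = ((Cp : ℕ) : ZMod n) :=
      add_left_cancel (h1.symm.trans h2')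
    have hdvd := (Nat.modEq_iff_dvd' hsC).mp ((ZMod.natCast_eq_natCast_iff _ _ _).mp hsc)
    rcases Nat.eq_zero_or_pos (Cp - s) with h0 | h0
    · omega
    · have := Nat.le_of_dvd h0 hdvd
      omega
  rcases Nat.lt_or_ge A s with hAs' | hAs'
  · -- 0 < A < s
    have : Cp = s ∨ (s < Cp ∧ Cp < n) ∨ Cp = n := by omega
    rcases this with hCs | hmid | hCN
    · -- Cp = s : contradiction
      exfalso
      have : σ (b + ((A : ℕ) : ZMod n)) = σ b := by rw [h1, h2, hCs]
      have hba : b + ((A : ℕ) : ZMod n) = b := by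
        have := hinv.injective this; rw [this]
      have : ((A : ℕ) : ZMod n) = 0 := by
        have := hba; rwa [add_eq_left] at this
      have hdvd := (ZMod.natCast_eq_zero_iff _ _).mp this
      have := Nat.le_of_dvd (by omega) hdvd
      omega
    · exact absurd (crossing n σ hinv b A s Cp hA0 hAs' hmid.1 hmid.2 h1 h2) hncr
    · -- Cp = n : contradiction
      exfalso
      have hCz : ((Cp : ℕ) : ZMod n) = 0 := by
        rw [hCN]; exact ZMod.natCast_self n
      have h2'' : σ (b + ((A : ℕ) : ZMod n)) = b := by rw [h2, hCz, add_zero]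
      have hba : b + ((A : ℕ) : ZMod n) = σ b := by
        have h3 := congrArg σ h2''
        rwa [hinv] at h3
      rw [h1] at hba
      have hsc : ((A : ℕ) : ZMod n) = ((s : ℕ) : ZMod n) := add_left_cancel hba
      have hdvd := (Nat.modEq_iff_dvd' hAs'.le).mp ((ZMod.natCast_eq_natCast_iff _ _ _).mp hsc)
      have := Nat.le_of_dvd (by omega) hdvd
      omega
  · -- A = s (since A ≤ s ≤ A)
    have hAs'' : A = s := by omega
    have h2' : σ (b + ((s : ℕ) : ZMod n)) = b + ((Cp : ℕ) : ZMod n) := by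
      rw [← hAs'']; exact h2
    have hσs : σ (b + ((s : ℕ) : ZMod n)) = b := by rw [← h1, hinv]
    have : ((Cp : ℕ) : ZMod n) = 0 := by
      have := hσs.symm.trans h2'
      rwa [left_eq_add] at this
    have hdvd := (ZMod.natCast_eq_zero_iff _ _).mp this
    have := Nat.le_of_dvd (by omega) hdvd
    omega

lemma intCast_val_cast (n : ℕ) [NeZero n] (i : ZMod n) : (((i.val : ℤ)) : ZMod n) = i := by
  rw [Int.cast_natCast, ZMod.natCast_val, ZMod.cast_id]

lemma omega_ne (n : ℕ) (hn : 1 ≤ n) (p : ℤ) (r : ℕ) (hr : r ≤ n) :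
    (p, r) ≠ ωA n (p, r) := by
  intro h
  simp only [ωA, Prod.mk.injEq] at h
  omega

lemma hTot_self (n : ℕ) (p : ℤ) (r : ℕ) (hr : r ≤ n) : hTotA n (p, r) (p, r) = 1 := by
  rw [hTotA_eq n p p r r hr hr, if_pos (by omega)]

lemma hTot_omega (n : ℕ) (p : ℤ) (r : ℕ) (hr : r ≤ n) :
    hTotA n (ωA n (p, r)) (p, r) = 1 := by
  show hTotA n (p + r - n, n - r) (p, r) = 1
  rw [hTotA_eq n _ p (n - r) r (by omega) hr, if_pos (by omega)]

lemma isConfig_Cset (n : ℕ) (hn : 1 ≤ n) (σ : ZMod n → ZMod n) (hσ : IsTwoBrauer n σ) :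
    IsConfigA n (Cset n σ) := by
  haveI : NeZero n := ⟨by omega⟩
  obtain ⟨hinv, hncr⟩ := hσ
  refine ⟨fun v hv => hv.1, ?_, ?_, ?_⟩
  · -- C1
    rintro ⟨q, s⟩ hs
    simp only at hs
    obtain ⟨t, ht, hor⟩ := exists_exit n σ hinv ((q : ℤ) : ZMod n) s hs
    have hqt : ((q + (t : ℤ) : ℤ) : ZMod n) = ((q : ℤ) : ZMod n) + ((t : ℕ) : ZMod n) :=
      cast_shift n q t
    rcases hor with h0 | hle
    · -- exit at 0 : σ (b + t) = b, take c = (q + t, n - t)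
      have hz : σ (((q : ℤ) : ZMod n) + ((t : ℕ) : ZMod n)) = ((q : ℤ) : ZMod n) := by
        have := (ZMod.val_eq_zero _).mp h0
        have h2 : σ (((q : ℤ) : ZMod n) + ((t : ℕ) : ZMod n)) - ((q : ℤ) : ZMod n) = 0 := this
        linear_combination h2
      refine ⟨(q + t, n - t), ⟨by omega, ?_⟩, ?_⟩
      · rw [show (q + (t : ℤ)) + ((n - t : ℕ) : ℤ) = q + (n : ℤ) by omega, hqt, hz]
        push_cast
        rw [ZMod.natCast_self]
        ring
      · rw [hTotA_eq n q (q + t) s (n - t) hs (by omega), if_pos (by omega)]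
        omega
    · -- exit beyond s : take c = (q + t, u - t)
      set u := (σ (((q : ℤ) : ZMod n) + ((t : ℕ) : ZMod n)) - ((q : ℤ) : ZMod n)).val with hu
      have hun : u < n := ZMod.val_lt _
      refine ⟨(q + t, u - t), ⟨by omega, ?_⟩, ?_⟩
      · rw [show (q + (t : ℤ)) + ((u - t : ℕ) : ℤ) = q + (u : ℤ) by omega, cast_shift, hqt]
        rw [ZMod.natCast_val, ZMod.cast_id]
        ring
      · rw [hTotA_eq n q (q + t) s (u - t) hs (by omega), if_pos (by omega)]
        omega
  · -- ω C = C
    ext ⟨p, r⟩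
    constructor
    · rintro ⟨⟨a, b⟩, ⟨hb, hmem⟩, heq⟩
      simp only at hb hmem
      simp only [ωA, Prod.mk.injEq] at heq
      obtain ⟨h1, h2⟩ := heq
      refine ⟨by omega, ?_⟩
      simp only
      rw [show p + ((r : ℕ) : ℤ) = a by omega]
      rw [show p = a + (b : ℤ) - (n : ℤ) by omega]
      have hab : ((a + (b : ℤ) - (n : ℤ) : ℤ) : ZMod n) = ((a + (b : ℤ) : ℤ) : ZMod n) := by
        push_cast
        rw [ZMod.natCast_self]
        ring
      rw [hab, hmem, hinv]
    · rintro ⟨hr, hmem⟩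
      simp only at hr hmem
      refine ⟨((p + (r : ℤ)), n - r), ⟨by omega, ?_⟩, ?_⟩
      · simp only
        rw [show (p + (r : ℤ)) + ((n - r : ℕ) : ℤ) = p + (n : ℤ) by omega]
        have h1 : ((p + (n : ℤ) : ℤ) : ZMod n) = ((p : ℤ) : ZMod n) := by
          push_cast
          rw [ZMod.natCast_self]
          ring
        rw [h1, hmem, hinv]
      · simp only [ωA, Prod.mk.injEq]
        constructor <;> omega
  · -- C2
    rintro ⟨p, r⟩ hc ⟨q, s⟩ hd
    have hr := hc.1
    have hs := hd.1
    simp only at hr hs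
    rw [if_neg (fun h => omega_ne n hn p r hr h.2)]
    by_cases hdc : (q, s) = (p, r) ∨ ((q : ℤ), s) = ωA n (p, r)
    · rw [if_pos hdc]
      rcases hdc with h | h
      · rw [h]; exact hTot_self n p r hr
      · rw [h]; exact hTot_omega n p r hr
    · rw [if_neg hdc]
      rw [hTotA_eq n q p s r hs hr, if_neg]
      rintro ⟨H1, H2, H3, H4⟩
      exact hdc (region_cases n hn σ ⟨hinv, hncr⟩ p q r s hc hd H1 H2 H3 H4)

lemma int_dvd_small (n m : ℤ) (hn : 0 < n) (h : n ∣ m) (h1 : -n ≤ m) (h2 : m ≤ n) :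
    m = -n ∨ m = 0 ∨ m = n := by
  obtain ⟨k, rfl⟩ := h
  rcases lt_trichotomy k 0 with hk | hk | hk
  · left
    have h4 : n * k ≤ -n := by nlinarith
    omega
  · right; left; simp [hk]
  · right; right
    have h4 : n ≤ n * k := by nlinarith
    omega

lemma exists_twoBrauer_of_isConfig (n : ℕ) (hn : 1 ≤ n) (C : Set (ℤ × ℕ))
    (hC : IsConfigA n C) : ∃ σ : ZMod n → ZMod n, IsTwoBrauer n σ ∧ C = Cset n σ := by
  haveI : NeZero n := ⟨by omega⟩
  obtain ⟨hbd, hC1, hω, hC2⟩ := hC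
  -- ω-closure, forwards and backwards
  have hωmem : ∀ p : ℤ, ∀ r : ℕ, (p, r) ∈ C → (p + r - n, n - r) ∈ C := by
    intro p r h
    have : ωA n (p, r) ∈ C := by rw [← hω]; exact ⟨(p, r), h, rfl⟩
    exact this
  have hωpre : ∀ p : ℤ, ∀ r : ℕ, (p, r) ∈ C → (p + r, n - r) ∈ C := by
    intro p r h
    rw [← hω] at h
    obtain ⟨⟨a, b⟩, hw, heq⟩ := h
    have hb := hbd _ hw
    simp only at hb
    simp only [ωA, Prod.mk.injEq] at heq
    obtain ⟨h1, h2⟩ := heq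
    have : ((p + (r : ℤ) : ℤ), n - r) = (a, b) := by
      simp only [Prod.mk.injEq]
      constructor <;> omega
    rw [this]
    exact hw
  have hshift₁ : ∀ p : ℤ, ∀ r : ℕ, (p, r) ∈ C → (p + n, r) ∈ C := by
    intro p r h
    have hr := hbd _ h
    simp only at hr
    have h2 := hωpre _ _ (hωpre p r h)
    rw [show (p + (r:ℤ)) + ((n - r : ℕ) : ℤ) = p + n by omega,
      show n - (n - r) = r by omega] at h2
    exact h2
  have hshift₂ : ∀ p : ℤ, ∀ r : ℕ, (p, r) ∈ C → (p - n, r) ∈ C := by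
    intro p r h
    have hr := hbd _ h
    simp only at hr
    have h2 := hωmem _ _ (hωmem p r h)
    rw [show (p + (r:ℤ) - n) + ((n - r : ℕ) : ℤ) - n = p - n by omega,
      show n - (n - r) = r by omega] at h2
    exact h2
  have hshiftk : ∀ (k : ℤ) (p : ℤ) (r : ℕ), (p, r) ∈ C → (p + n * k, r) ∈ C := by
    intro k
    induction k using Int.induction_on with
    | zero => intro p r h; simpa using h
    | succ k ih =>
        intro p r h
        have h2 := hshift₁ _ _ (ih p r h)
        rw [show p + n * k + n = p + n * ((k : ℤ) + 1) by ring] at h2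
        exact h2
    | pred k ih =>
        intro p r h
        have h2 := hshift₂ _ _ (ih p r h)
        rw [show p + n * (-(k:ℤ)) - n = p + n * (-(k : ℤ) - 1) by ring] at h2
        exact h2
  have hmem_shift : ∀ p : ℤ, ∀ r : ℕ, ∀ p' : ℤ, (p, r) ∈ C → (n : ℤ) ∣ (p' - p) →
      (p', r) ∈ C := by
    intro p r p' h hd
    obtain ⟨k, hk⟩ := hd
    have := hshiftk k p r h
    rwa [show p + n * k = p' by omega] at this
  -- every column is inhabited
  have hcol : ∀ p : ℤ, ∃ r, r ≤ n ∧ (p, r) ∈ C := by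
    intro p
    obtain ⟨⟨p', r'⟩, hc, hpos⟩ := hC1 (p, 0) (by simp)
    have hr' := hbd _ hc
    simp only at hr'
    rw [hTotA_eq n p p' 0 r' (by omega) hr'] at hpos
    split_ifs at hpos with h
    · exact ⟨r', hr', by rwa [show p' = p by omega] at hc⟩
    · omega
  -- column dichotomy
  have hdich0 : ∀ p : ℤ, ∀ r r' : ℕ, r ≤ r' → (p, r) ∈ C → (p, r') ∈ C →
      r = r' ∨ (r = 0 ∧ r' = n) := by
    intro p r r' hle h h'
    have hr := hbd _ h
    have hr' := hbd _ h'
    simp only at hr hr'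
    have h1 : hTotA n (p, r) (p, r') = 1 := by
      rw [hTotA_eq n p p r r' hr hr', if_pos (by omega)]
    have h2 := hC2 (p, r') h' (p, r) h
    rw [h1] at h2
    by_cases hb : (p, r) = (p, r') ∨ ((p : ℤ), r) = ωA n (p, r')
    · rcases hb with hb | hb
      · left
        have := (Prod.mk.injEq _ _ _ _).mp hb
        omega
      · right
        simp only [ωA, Prod.mk.injEq] at hb
        omega
    · rw [if_neg (fun hx => hb (Or.inl hx.1)), if_neg hb] at h2
      omega
  have hdich : ∀ p : ℤ, ∀ r r' : ℕ, (p, r) ∈ C → (p, r') ∈ C →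
      r = r' ∨ (r = 0 ∧ r' = n) ∨ (r = n ∧ r' = 0) := by
    intro p r r' h h'
    rcases le_or_gt r r' with hle | hlt
    · rcases hdich0 p r r' hle h h' with h1 | h1
      · exact Or.inl h1
      · exact Or.inr (Or.inl h1)
    · rcases hdich0 p r' r hlt.le h' h with h1 | h1
      · exact Or.inl h1.symm
      · exact Or.inr (Or.inr ⟨h1.2, h1.1⟩)
  have hcong : ∀ p : ℤ, ∀ r r' : ℕ, (p, r) ∈ C → (p, r') ∈ C →
      (n : ℤ) ∣ ((r : ℤ) - r') := by
    intro p r r' h h'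
    rcases hdich p r r' h h' with h1 | h1 | h1
    · simp [h1]
    · exact ⟨-1, by omega⟩
    · exact ⟨1, by omega⟩
  have hmem_congr : ∀ p : ℤ, ∀ r r' : ℕ, (p, r) ∈ C → r' ≤ n →
      (n : ℤ) ∣ ((r' : ℤ) - r) → (p, r') ∈ C := by
    intro p r r' h hr' hd
    have hr := hbd _ h
    simp only at hr
    rcases int_dvd_small (n : ℤ) ((r' : ℤ) - r) (by omega) hd (by omega) (by omega) with h1 | h1 | h1
    · -- r = n, r' = 0
      have hrn : r = n := by omega
      have hr0 : r' = 0 := by omega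
      rw [hrn] at h
      have h2 := hωpre p n h
      rw [show n - n = 0 by omega] at h2
      have h3 := hshift₂ _ _ h2
      rw [show p + (n : ℤ) - n = p by ring] at h3
      rwa [hr0]
    · have : r' = r := by omega
      rwa [this]
    · -- r = 0, r' = n
      have hr0 : r = 0 := by omega
      have hrn : r' = n := by omega
      subst hr0
      have h2 := hωmem p 0 h
      rw [show p + ((0:ℕ):ℤ) - n = p - n by simp] at h2
      have h3 := hshift₁ _ _ h2
      rw [show p - (n : ℤ) + n = p by ring] at h3
      rw [hrn]
      simpa using h3
  -- define σ
  choose R hRn hRmem using hcol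
  set σ : ZMod n → ZMod n :=
    fun i => ((((i.val : ℤ)) + (R ((i.val : ℤ)) : ℤ) : ℤ) : ZMod n) with hσdef
  have hσapp : ∀ p : ℤ, σ ((p : ℤ) : ZMod n) =
      (((((p : ℤ) : ZMod n).val : ℤ) + (R ((((p : ℤ) : ZMod n)).val : ℤ) : ℤ) : ℤ) : ZMod n) :=
    fun p => rfl
  have hpdvd : ∀ p : ℤ, (n : ℤ) ∣ (p - ((((p : ℤ) : ZMod n)).val : ℤ)) := by
    intro p
    have h1 : ((((((p : ℤ) : ZMod n)).val : ℤ) : ℤ) : ZMod n) = ((p : ℤ) : ZMod n) :=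
      intCast_val_cast n _
    rw [ZMod.intCast_eq_intCast_iff_dvd_sub] at h1
    exact h1
  have hCeq : C = Cset n σ := by
    ext ⟨p, r⟩
    set p₀ : ℤ := ((((p : ℤ) : ZMod n)).val : ℤ) with hp₀
    have hdvd := hpdvd p
    have hmem₀ : (p, R p₀) ∈ C := hmem_shift p₀ (R p₀) p (hRmem p₀) hdvd
    constructor
    · intro h
      have hr := hbd _ h
      simp only at hr
      refine ⟨hr, ?_⟩
      have hrr := hcong p r (R p₀) h hmem₀
      show _ = σ _
      rw [hσapp, ZMod.intCast_eq_intCast_iff_dvd_sub]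
      obtain ⟨k1, e1⟩ := hdvd
      obtain ⟨k2, e2⟩ := hrr
      exact ⟨-k1 - k2, by linear_combination (-e1 - e2)⟩
    · rintro ⟨hr, hmem⟩
      simp only at hr hmem
      rw [hσapp, ZMod.intCast_eq_intCast_iff_dvd_sub] at hmem
      apply hmem_congr p (R p₀) r hmem₀ hr
      obtain ⟨k1, e1⟩ := hdvd
      obtain ⟨k2, e2⟩ := hmem
      exact ⟨-k1 - k2, by linear_combination (-e1 - e2)⟩
  have hinv : Function.Involutive σ := by
    intro i
    set p₀ : ℤ := (i.val : ℤ) with hp₀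
    have hi : ((p₀ : ℤ) : ZMod n) = i := intCast_val_cast n i
    have h1 : (p₀, R p₀) ∈ C := hRmem p₀
    have h2 : (p₀ + R p₀, n - R p₀) ∈ C := hωpre p₀ (R p₀) h1
    rw [hCeq] at h2
    obtain ⟨-, h3⟩ := h2
    simp only at h3
    have hσi : σ i = ((p₀ + (R p₀ : ℤ) : ℤ) : ZMod n) := by
      rw [← hi, hσapp]
      congr 2 <;> rw [hi, ← hp₀]
    rw [hσi, ← h3, show (p₀ + (R p₀ : ℤ)) + ((n - R p₀ : ℕ) : ℤ) = p₀ + (n : ℤ) by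
      have := hRn p₀; omega]
    rw [← hi]
    push_cast
    rw [ZMod.natCast_self]
    ring
  have hncr : ¬∃ i j : ZMod n, i.val < j.val ∧ j.val < (σ i).val ∧ (σ i).val < (σ j).val := by
    rintro ⟨i, j, hij1, hij2, hij3⟩
    have hvi := ZMod.val_lt i
    have hvj := ZMod.val_lt j
    have hvsi := ZMod.val_lt (σ i)
    have hvsj := ZMod.val_lt (σ j)
    have hmem : ∀ m : ZMod n, m.val ≤ (σ m).val →
        ((m.val : ℤ), (σ m).val - m.val) ∈ C := by
      intro m hm
      rw [hCeq]
      refine ⟨by have := ZMod.val_lt (σ m); omega, ?_⟩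
      show ((_ + _ : ℤ) : ZMod n) = σ _
      rw [show ((m.val : ℤ) + (((σ m).val - m.val : ℕ) : ℤ) : ℤ) = (((σ m).val : ℤ)) by omega,
        intCast_val_cast, intCast_val_cast]
    have hci := hmem i (by omega)
    have hcj := hmem j (by omega)
    have h1 : hTotA n ((i.val : ℤ), (σ i).val - i.val) ((j.val : ℤ), (σ j).val - j.val) = 1 := by
      rw [hTotA_eq n _ _ _ _ (by omega) (by omega), if_pos (by omega)]
    have h2 := hC2 _ hcj _ hci
    rw [h1] at h2
    by_cases hb : ((i.val : ℤ), (σ i).val - i.val) = ((j.val : ℤ), (σ j).val - j.val) ∨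
        ((i.val : ℤ), (σ i).val - i.val) = ωA n ((j.val : ℤ), (σ j).val - j.val)
    · rcases hb with hb | hb
      · have h3 := (Prod.mk.injEq _ _ _ _).mp hb
        omega
      · simp only [ωA, Prod.mk.injEq] at hb
        omega
    · rw [if_neg (fun hx => hb (Or.inl hx.1)), if_neg hb] at h2
      omega
  exact ⟨σ, ⟨hinv, hncr⟩, hCeq⟩

/-- Theorem 6.5: a subset `C` of the vertices of `ℤA_{n+1}` is a configuration iff
it is of the form `{(p,r) : (p+r : ZMod n) = σ (p : ZMod n)}` for a (unique)
`2`-Brauer relation `σ` of rank `n`; this gives a bijection between configurations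
of `ℤA_{n+1}` and `2`-Brauer relations of rank `n`. -/
theorem config_ZA_iff_twoBrauer (n : ℕ) (hn : 1 ≤ n) :
    (∀ C : Set (ℤ × ℕ),
      IsConfigA n C ↔
        ∃ σ : ZMod n → ZMod n, IsTwoBrauer n σ ∧
          C = {v : ℤ × ℕ | v.2 ≤ n ∧
            ((v.1 + (v.2 : ℤ) : ℤ) : ZMod n) = σ ((v.1 : ℤ) : ZMod n)}) ∧
      ∀ σ₁ σ₂ : ZMod n → ZMod n, IsTwoBrauer n σ₁ → IsTwoBrauer n σ₂ →
        {v : ℤ × ℕ | v.2 ≤ n ∧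
            ((v.1 + (v.2 : ℤ) : ℤ) : ZMod n) = σ₁ ((v.1 : ℤ) : ZMod n)} =
          {v : ℤ × ℕ | v.2 ≤ n ∧
            ((v.1 + (v.2 : ℤ) : ℤ) : ZMod n) = σ₂ ((v.1 : ℤ) : ZMod n)} →
        σ₁ = σ₂ := by
  constructor
  · intro C
    constructor
    · intro hC
      obtain ⟨σ, hσ, hCeq⟩ := exists_twoBrauer_of_isConfig n hn C hC
      exact ⟨σ, hσ, hCeq⟩
    · rintro ⟨σ, hσ, rfl⟩
      exact isConfig_Cset n hn σ hσ
  · intro σ₁ σ₂ h₁ h₂ heq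
    haveI : NeZero n := ⟨by omega⟩
    funext i
    have hval := ZMod.val_lt (σ₁ i - i)
    have hY : (((i.val : ℤ)) : ZMod n) = i := intCast_val_cast n i
    have e1 : ((((i.val : ℤ) + (((σ₁ i - i).val : ℕ) : ℤ)) : ℤ) : ZMod n) = σ₁ i := by
      push_cast [ZMod.natCast_val, ZMod.cast_id]
      ring
    have hmem1 : (((i.val : ℤ)), (σ₁ i - i).val) ∈
        {v : ℤ × ℕ | v.2 ≤ n ∧
          ((v.1 + (v.2 : ℤ) : ℤ) : ZMod n) = σ₁ ((v.1 : ℤ) : ZMod n)} := by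
      refine ⟨le_of_lt hval, ?_⟩
      show _ = σ₁ _
      rw [hY]
      exact e1
    rw [heq] at hmem1
    have e2 := hmem1.2
    simp only at e2
    rw [hY] at e2
    exact e1.symm.trans e2
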